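/- If the semi-oblivious chase of Σ terminates on the critical instance I_a, then there exists a constant k_d such that for every instance I, the frontier depth of every term in so-chase(I, Σ) is bounded by k_d. -/

import Mathlib

namespace ChasePaper

/-- Rules: atoms are (predicate, list of variables). -/
structure Rule (P V : Type) where
  body : List (P × List V)
  head : List (P × List V)

/-- Terms appearing in the chase: constants, (instance) variables, and fresh
variables `z_{(σ,π)}` named by the rule, the existential variable, and a substitution. -/
inductive GTerm (P C V : Type) where
  | const : C → GTerm P C V
  | var   : V → GTerm P C V
  | fresh : Rule P V → V → (V → GTerm P C V) → GTerm P C V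

abbrev GAtom (P C V : Type) := P × List (GTerm P C V)

variable {P C V : Type}

def bodyVars (σ : Rule P V) : List V := σ.body.flatMap Prod.snd
def headVars (σ : Rule P V) : List V := σ.head.flatMap Prod.snd
def frontier [DecidableEq V] (σ : Rule P V) : List V :=
  (bodyVars σ).filter (· ∈ headVars σ)

/-- A rule is datalog if all head variables occur in the body. -/
def IsDatalog (σ : Rule P V) : Prop := ∀ v ∈ headVars σ, v ∈ bodyVars σ
/-- A rule is fully-existential if every head atom contains an existential variable. -/
def IsFE (σ : Rule P V) : Prop := ∀ a ∈ σ.head, ∃ v ∈ a.2, v ∉ bodyVars σ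

def applyAtom (π : V → GTerm P C V) (a : P × List V) : GAtom P C V :=
  (a.1, a.2.map π)

def restrictBody [DecidableEq V] (σ : Rule P V) (π : V → GTerm P C V) : V → GTerm P C V :=
  fun u => if u ∈ bodyVars σ then π u else GTerm.var u

def restrictFr [DecidableEq V] (σ : Rule P V) (π : V → GTerm P C V) : V → GTerm P C V :=
  fun u => if u ∈ frontier σ then π u else GTerm.var u

/-- Oblivious naming of fresh variables: `z_{(σ,π)}`. -/
def extendO [DecidableEq V] (σ : Rule P V) (π : V → GTerm P C V) : V → GTerm P C V :=
  fun v => if v ∈ bodyVars σ then π v else GTerm.fresh σ v (restrictBody σ π)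

/-- Semi-oblivious naming of fresh variables: `z_{(σ,π|fr(σ))}`. -/
def extendSO [DecidableEq V] (σ : Rule P V) (π : V → GTerm P C V) : V → GTerm P C V :=
  fun v => if v ∈ bodyVars σ then π v else GTerm.fresh σ v (restrictFr σ π)

def isTrigger (σ : Rule P V) (π : V → GTerm P C V) (S : Set (GAtom P C V)) : Prop :=
  ∀ a ∈ σ.body, applyAtom π a ∈ S

/-- Breadth-first oblivious chase. -/
def ochase [DecidableEq V] (Rs : Set (Rule P V)) (I : Set (GAtom P C V)) : ℕ → Set (GAtom P C V)
  | 0 => I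
  | i+1 => ochase Rs I i ∪
      {f | ∃ σ ∈ Rs, ∃ π, isTrigger σ π (ochase Rs I i) ∧ ∃ a ∈ σ.head, f = applyAtom (extendO σ π) a}

/-- Breadth-first semi-oblivious chase. -/
def sochase [DecidableEq V] (Rs : Set (Rule P V)) (I : Set (GAtom P C V)) : ℕ → Set (GAtom P C V)
  | 0 => I
  | i+1 => sochase Rs I i ∪
      {f | ∃ σ ∈ Rs, ∃ π, isTrigger σ π (sochase Rs I i) ∧ ∃ a ∈ σ.head, f = applyAtom (extendSO σ π) a}

def ochaseFull [DecidableEq V] (Rs : Set (Rule P V)) (I : Set (GAtom P C V)) : Set (GAtom P C V) :=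
  ⋃ i, ochase Rs I i
def sochaseFull [DecidableEq V] (Rs : Set (Rule P V)) (I : Set (GAtom P C V)) : Set (GAtom P C V) :=
  ⋃ i, sochase Rs I i

/-- Rank of a fact: the smallest breadth-first round at which it appears. -/
noncomputable def rankO [DecidableEq V] (Rs : Set (Rule P V)) (I : Set (GAtom P C V))
    (f : GAtom P C V) : ℕ := sInf {i | f ∈ ochase Rs I i}
noncomputable def rankSO [DecidableEq V] (Rs : Set (Rule P V)) (I : Set (GAtom P C V))
    (f : GAtom P C V) : ℕ := sInf {i | f ∈ sochase Rs I i}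

/-- Rank of a term: the smallest round at which some fact contains it. -/
noncomputable def trankO [DecidableEq V] (Rs : Set (Rule P V)) (I : Set (GAtom P C V))
    (t : GTerm P C V) : ℕ := sInf {i | ∃ f ∈ ochase Rs I i, t ∈ f.2}
noncomputable def trankSO [DecidableEq V] (Rs : Set (Rule P V)) (I : Set (GAtom P C V))
    (t : GTerm P C V) : ℕ := sInf {i | ∃ f ∈ sochase Rs I i, t ∈ f.2}

/-- Existential depth of a term. -/
def depth : GTerm P C V → ℕ
  | .const _ => 0
  | .var _ => 0
  | .fresh σ _ π => 1 + List.foldr (fun v m => max (depth (π v)) m) 0 (bodyVars σ)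

/-- Frontier existential depth of a term. -/
def frdepth [DecidableEq V] : GTerm P C V → ℕ
  | .const _ => 0
  | .var _ => 0
  | .fresh σ _ π =>
      if frontier σ = ([] : List V) then 1
      else 1 + List.foldr (fun v m => max (frdepth (π v)) m) 0 (frontier σ)

/-- Existential depth of a fact: max depth of its terms. -/
def depthF (f : GAtom P C V) : ℕ := List.foldr (fun t m => max (depth t) m) 0 f.2
def frdepthF [DecidableEq V] (f : GAtom P C V) : ℕ :=
  List.foldr (fun t m => max (frdepth t) m) 0 f.2

/-- Active domain of a set of atoms. -/
def adom (S : Set (GAtom P C V)) : Set (GTerm P C V) := {t | ∃ f ∈ S, t ∈ f.2}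

def mapAtom (h : GTerm P C V → GTerm P C V) (f : GAtom P C V) : GAtom P C V :=
  (f.1, f.2.map h)

/-- An embedding from `S` to `S'`: a substitution mapping every atom of `S` into `S'`. -/
def IsEmbedding (h : GTerm P C V → GTerm P C V) (S S' : Set (GAtom P C V)) : Prop :=
  ∀ f ∈ S, mapAtom h f ∈ S'

/-- `I` is an instance w.r.t. an arity function: finite, arity-correct,
and using only constants and variables. -/
def IsInstance (ar : P → ℕ) (I : Set (GAtom P C V)) : Prop :=
  I.Finite ∧ ∀ f ∈ I, f.2.length = ar f.1 ∧
    ∀ t ∈ f.2, (∃ c, t = GTerm.const c) ∨ (∃ v, t = GTerm.var v)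

def RuleOk (ar : P → ℕ) (σ : Rule P V) : Prop :=
  ∀ a ∈ σ.body ++ σ.head, a.2.length = ar a.1

/-- The critical instance over `ar` with special constant `a`. -/
def critical (ar : P → ℕ) (a : C) : Set (GAtom P C V) :=
  {f | f.2 = List.replicate (ar f.1) (GTerm.const a)}


section Aux

lemma foldr_max_congr {α : Type*} {f g : α → ℕ} :
    ∀ {l : List α}, (∀ v ∈ l, f v = g v) →
    l.foldr (fun v m => max (f v) m) 0 = l.foldr (fun v m => max (g v) m) 0
  | [], _ => rfl
  | x :: l, h => by
    simp only [List.foldr]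
    rw [h x (by simp), foldr_max_congr (fun v hv => h v (by simp [hv]))]

lemma foldr_max_le {α : Type*} {f : α → ℕ} {n : ℕ} :
    ∀ {l : List α}, (∀ v ∈ l, f v ≤ n) →
    l.foldr (fun v m => max (f v) m) 0 ≤ n
  | [], _ => Nat.zero_le n
  | x :: l, h => by
    simp only [List.foldr]
    exact max_le (h x (by simp)) (foldr_max_le fun v hv => h v (by simp [hv]))

/-- Collapse a term: all constants and instance variables become `a`; fresh
variables are renamed according to the collapsed frontier image. -/
def hcol [DecidableEq V] (a : C) : GTerm P C V → GTerm P C V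
  | .const _ => .const a
  | .var _ => .const a
  | .fresh σ v π => .fresh σ v (restrictFr σ (fun u => hcol a (π u)))

lemma frdepth_hcol [DecidableEq V] (a : C) (t : GTerm P C V) :
    frdepth (hcol a t) = frdepth t := by
  induction t with
  | const c => rfl
  | var v => rfl
  | fresh σ v π ih =>
    simp only [hcol, frdepth]
    split
    · rfl
    · congr 1
      apply foldr_max_congr
      intro u hu
      simp only [restrictFr, if_pos hu]
      exact ih u

lemma hcol_extendSO [DecidableEq V] (a : C) (σ : Rule P V) (π : V → GTerm P C V) :
    (fun v => hcol a (extendSO σ π v)) = extendSO σ (fun v => hcol a (π v)) := by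
  funext v
  by_cases hv : v ∈ bodyVars σ
  · simp [extendSO, hv]
  · simp only [extendSO, if_neg hv, hcol]
    congr 1
    funext u
    by_cases hu : u ∈ frontier σ
    · simp [restrictFr, hu]
    · simp [restrictFr, hu]

lemma embed_crit [DecidableEq V] (ar : P → ℕ) (a : C) (Rs : Set (Rule P V))
    {I : Set (GAtom P C V)} (hI : IsInstance ar I) (i : ℕ) :
    IsEmbedding (hcol a) (sochase Rs I i)
      (sochase Rs (critical ar a : Set (GAtom P C V)) i) := by
  induction i with
  | zero =>
    intro f hf
    obtain ⟨hlen, hterms⟩ := hI.2 f hf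
    show mapAtom (hcol a) f ∈ critical ar a
    show (mapAtom (hcol a) f).2 = List.replicate (ar (mapAtom (hcol a) f).1) (GTerm.const a)
    simp only [mapAtom]
    rw [List.eq_replicate_iff]
    refine ⟨by simpa using hlen, ?_⟩
    intro t ht
    rcases List.mem_map.mp ht with ⟨s, hs, rfl⟩
    rcases hterms s hs with ⟨c, rfl⟩ | ⟨v, rfl⟩ <;> rfl
  | succ i ih =>
    intro f hf
    rcases hf with hf | ⟨σ, hσ, π, htrig, a', ha', rfl⟩
    · exact Set.mem_union_left _ (ih f hf)
    · refine Set.mem_union_right _ ⟨σ, hσ, fun v => hcol a (π v), ?_, a', ha', ?_⟩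
      · intro b hb
        have := ih _ (htrig b hb)
        simpa [mapAtom, applyAtom, Function.comp_def] using this
      · simp [mapAtom, applyAtom, ← hcol_extendSO a σ π]

lemma crit_frdepth [DecidableEq V] (ar : P → ℕ) (a : C) (Rs : Set (Rule P V)) (i : ℕ) :
    ∀ t ∈ adom (sochase Rs (critical ar a : Set (GAtom P C V)) i), frdepth t ≤ i := by
  induction i with
  | zero =>
    rintro t ⟨f, hf, ht⟩
    have hcrit : f.2 = List.replicate (ar f.1) (GTerm.const a) := hf
    rw [hcrit] at ht
    rw [List.eq_of_mem_replicate ht]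
    exact le_refl _
  | succ i ih =>
    rintro t ⟨f, hf, ht⟩
    rcases hf with hf | ⟨σ, hσ, π, htrig, a', ha', rfl⟩
    · exact le_trans (ih t ⟨f, hf, ht⟩) (Nat.le_succ i)
    · simp only [applyAtom] at ht
      rcases List.mem_map.mp ht with ⟨v, hv, rfl⟩
      have hbody : ∀ u ∈ bodyVars σ, frdepth (π u) ≤ i := by
        intro u hu
        rcases List.mem_flatMap.mp hu with ⟨b, hb, hub⟩
        exact ih (π u) ⟨applyAtom π b, htrig b hb, List.mem_map_of_mem (f := π) hub⟩
      by_cases hv' : v ∈ bodyVars σ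
      · simp only [extendSO, if_pos hv']
        exact le_trans (hbody v hv') (Nat.le_succ i)
      · simp only [extendSO, if_neg hv', frdepth]
        split
        · omega
        · have hle : (frontier σ).foldr
              (fun u m => max (frdepth (restrictFr σ π u)) m) 0 ≤ i := by
            apply foldr_max_le
            intro u hu
            have hub : u ∈ bodyVars σ := (List.mem_filter.mp hu).1
            simp only [restrictFr, if_pos hu]
            exact hbody u hub
          omega

end Aux

/-- if the semi-oblivious chase terminates on the critical
instance, then there is a uniform bound `k_d` on the frontier depth of all terms
of the semi-oblivious chase, over all instances. -/
theorem statement12 {P C V : Type} [DecidableEq V] (ar : P → ℕ) (a : C)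
    (Rs : Set (Rule P V)) (hRs : ∀ σ ∈ Rs, RuleOk ar σ)
    (hterm : ∃ k, sochase Rs (critical ar a : Set (GAtom P C V)) k
        = sochaseFull Rs (critical ar a)) :
    ∃ kd : ℕ, ∀ I : Set (GAtom P C V), IsInstance ar I →
      ∀ t ∈ adom (sochaseFull Rs I), frdepth t ≤ kd := by
  obtain ⟨k, hk⟩ := hterm
  refine ⟨k, ?_⟩
  rintro I hI t ⟨f, hf, htf⟩
  obtain ⟨i, hi⟩ : ∃ i, f ∈ sochase Rs I i := by
    simpa [sochaseFull, Set.mem_iUnion] using hf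
  have hmem : mapAtom (hcol a) f ∈ sochase Rs (critical ar a : Set (GAtom P C V)) k := by
    rw [hk]
    exact Set.mem_iUnion.mpr ⟨i, embed_crit ar a Rs hI i f hi⟩
  have hle : frdepth (hcol a t) ≤ k :=
    crit_frdepth ar a Rs k _ ⟨mapAtom (hcol a) f, hmem, List.mem_map_of_mem htf⟩
  rw [frdepth_hcol] at hle
  exact hle

end ChasePaper
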